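/- Let X be a Banach space, let (T_n) ⊂ X × X* be a sequence of monotone operators, and suppose T := liminf T_n is maximal monotone. If (x, x*) ∉ T and (x_n, x_n*) → (x, x*) strongly in X × X*, then (x_n, x_n*) ∉ T_n for all sufficiently large n. -/

import Mathlib

open Filter Topology
noncomputable section
variable {X : Type*} [NormedAddCommGroup X] [NormedSpace ℝ X]

def pairing (p : X × StrongDual ℝ X) : ℝ := p.2 p.1

def ConvexERealOn {E : Type*} [AddCommGroup E] [Module ℝ E] (f : E → EReal) : Prop :=
  ∀ x y : E, ∀ a b : ℝ, 0 ≤ a → 0 ≤ b → a + b = 1 →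
    f (a • x + b • y) ≤ (a : EReal) * f x + (b : EReal) * f y

def IsGamma {E : Type*} [AddCommGroup E] [Module ℝ E] [TopologicalSpace E] (f : E → EReal) : Prop :=
  LowerSemicontinuous f ∧ ConvexERealOn f ∧ ∀ x, f x ≠ ⊥

def EpiConverges {E : Type*} [TopologicalSpace E] (fs : ℕ → E → EReal) (f : E → EReal) : Prop :=
  ∀ z : E,
    (∃ zs : ℕ → E, Tendsto zs atTop (nhds z) ∧
      Tendsto (fun n => fs n (zs n)) atTop (nhds (f z))) ∧
    (∀ zs : ℕ → E, Tendsto zs atTop (nhds z) →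
      f z ≤ Filter.liminf (fun n => fs n (zs n)) atTop)

def conjFn (f : X × StrongDual ℝ X → EReal) (q : StrongDual ℝ X × X) : EReal :=
  ⨆ p : X × StrongDual ℝ X, (((q.1 p.1 + p.2 q.2 : ℝ) : EReal) - f p)

def Lset (f : X × StrongDual ℝ X → EReal) : Set (X × StrongDual ℝ X) :=
  {p | f p = (pairing p : EReal)}

def MonotoneSet (T : Set (X × StrongDual ℝ X)) : Prop :=
  ∀ p ∈ T, ∀ q ∈ T, 0 ≤ (q.2 - p.2) (q.1 - p.1)

def MaximalMonotone (T : Set (X × StrongDual ℝ X)) : Prop :=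
  MonotoneSet T ∧ ∀ S : Set (X × StrongDual ℝ X), MonotoneSet S → T ⊆ S → S = T

def OpLiminf (Ts : ℕ → Set (X × StrongDual ℝ X)) : Set (X × StrongDual ℝ X) :=
  {p | ∃ zs : ℕ → X × StrongDual ℝ X, (∀ n, zs n ∈ Ts n) ∧ Tendsto zs atTop (nhds p)}

def fitz (T : Set (X × StrongDual ℝ X)) (p : X × StrongDual ℝ X) : EReal :=
  ⨆ q ∈ T, (((p.2 - q.2) (q.1 - p.1) + p.2 p.1 : ℝ) : EReal)

open Classical in
def indic (T : Set (X × StrongDual ℝ X)) (p : X × StrongDual ℝ X) : EReal :=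
  if p ∈ T then 0 else ⊤

def IsRepFunOf (g : X × StrongDual ℝ X → EReal) (T : Set (X × StrongDual ℝ X)) : Prop :=
  IsGamma g ∧ (∀ p, (pairing p : EReal) ≤ g p) ∧ ∀ p, (g p = (pairing p : EReal) ↔ p ∈ T)

def IsReflexive (X : Type*) [NormedAddCommGroup X] [NormedSpace ℝ X] : Prop :=
  Function.Surjective (NormedSpace.inclusionInDoubleDual ℝ X)

def WeakTendstoProd (zs : ℕ → X × StrongDual ℝ X) (z : X × StrongDual ℝ X) : Prop :=
  (∀ g : StrongDual ℝ X, Tendsto (fun n => g (zs n).1) atTop (nhds (g z.1))) ∧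
  (∀ G : StrongDual ℝ (StrongDual ℝ X),
    Tendsto (fun n => G (zs n).2) atTop (nhds (G z.2)))

def MoscoConverges (fs : ℕ → X × StrongDual ℝ X → EReal)
    (f : X × StrongDual ℝ X → EReal) : Prop :=
  ∀ z : X × StrongDual ℝ X,
    (∃ zs : ℕ → X × StrongDual ℝ X, Tendsto zs atTop (nhds z) ∧
      Tendsto (fun n => fs n (zs n)) atTop (nhds (f z))) ∧
    (∀ zs : ℕ → X × StrongDual ℝ X, WeakTendstoProd zs z →
      f z ≤ Filter.liminf (fun n => fs n (zs n)) atTop)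

def Tset (h : X × StrongDual ℝ X → EReal) : Set (X × StrongDual ℝ X) :=
  {p | ((2 * pairing p : ℝ) : EReal) = h p + conjFn h (p.2, p.1)}

/-- If `T = liminf T_n` is maximal monotone, `(x,x*) ∉ T` and
`(x_n,x_n*) → (x,x*)`, then `(x_n,x_n*) ∉ T_n` for all large `n`. -/
theorem stmt10 [CompleteSpace X]
    (Ts : ℕ → Set (X × StrongDual ℝ X))
    (hmono : ∀ n, MonotoneSet (Ts n))
    (hTmax : MaximalMonotone (OpLiminf Ts))
    (p : X × StrongDual ℝ X) (hp : p ∉ OpLiminf Ts)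
    (zs : ℕ → X × StrongDual ℝ X) (hzs : Tendsto zs atTop (nhds p)) :
    ∀ᶠ n in atTop, zs n ∉ Ts n := by
  obtain ⟨hTm, hTmaxmax⟩ := hTmax
  have hq : ∃ q ∈ OpLiminf Ts, (q.2 - p.2) (q.1 - p.1) < 0 := by
    by_contra h
    push_neg at h
    have hS : MonotoneSet (insert p (OpLiminf Ts)) := by
      intro a ha b hb
      rcases ha with rfl | ha <;> rcases hb with rfl | hb
      · simp
      · exact h b hb
      · have h1 := h a ha
        have : ((b.2 - a.2) (b.1 - a.1)) = ((a.2 - b.2) (a.1 - b.1)) := by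
          simp only [ContinuousLinearMap.sub_apply, map_sub]; ring
        rw [this]; exact h1
      · exact hTm a ha b hb
    have heq := hTmaxmax _ hS (Set.subset_insert _ _)
    exact hp (heq ▸ Set.mem_insert p _)
  obtain ⟨q, hqT, hqneg⟩ := hq
  obtain ⟨qs, hqsmem, hqs⟩ := hqT
  by_contra hcon
  rw [Filter.not_eventually] at hcon
  simp only [not_not] at hcon
  obtain ⟨φ, hφ, hmem⟩ := Filter.extraction_of_frequently_atTop hcon
  have h1 : Tendsto (fun n => zs (φ n)) atTop (nhds p) := hzs.comp hφ.tendsto_atTop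
  have h2 : Tendsto (fun n => qs (φ n)) atTop (nhds q) := hqs.comp hφ.tendsto_atTop
  have heval : Continuous fun r : StrongDual ℝ X × X => r.1 r.2 :=
    isBoundedBilinearMap_apply.continuous
  have hA : Tendsto (fun n => (zs (φ n)).2 - (qs (φ n)).2) atTop (nhds (p.2 - q.2)) :=
    ((continuous_snd.tendsto p).comp h1).sub ((continuous_snd.tendsto q).comp h2)
  have hB : Tendsto (fun n => (zs (φ n)).1 - (qs (φ n)).1) atTop (nhds (p.1 - q.1)) :=
    ((continuous_fst.tendsto p).comp h1).sub ((continuous_fst.tendsto q).comp h2)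
  have hlim : Tendsto (fun n => ((zs (φ n)).2 - (qs (φ n)).2) ((zs (φ n)).1 - (qs (φ n)).1))
      atTop (nhds ((p.2 - q.2) (p.1 - q.1))) :=
    (heval.tendsto _).comp (hA.prodMk_nhds hB)
  have hge : 0 ≤ (p.2 - q.2) (p.1 - q.1) :=
    ge_of_tendsto hlim (Filter.Eventually.of_forall fun n =>
      hmono (φ n) _ (hqsmem (φ n)) _ (hmem n))
  have hsym : ((q.2 - p.2) (q.1 - p.1)) = ((p.2 - q.2) (p.1 - q.1)) := by
    simp only [ContinuousLinearMap.sub_apply, map_sub]; ring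
  linarith [hsym ▸ hge]
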